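/- Let Γ = (G, σ) be a balanced signed graph on n vertices and let F_k(Γ) be its k-token signed graph for some k with 1 ≤ k ≤ n−1. Let L_1 and L_k be the Laplacian matrices of Γ and F_k(Γ), respectively, and let B⁺ be the (n; 1, k)-binomial matrix (rows indexed by k-subsets of the vertex set, columns by vertices, entry 1 exactly when the vertex lies in the subset). Then there exist diagonal ±1 matrices S_1 (of size n × n) and S_k (of size C(n,k) × C(n,k)) such that the signed binomial matrix B = S_k B⁺ S_1 satisfies B L_1 = L_k B. -/

import Mathlib

open scoped Classical

/-- A signed graph: a simple graph together with a signature assigning a sign `±1`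
(an element of `ℤˣ`) to each pair of vertices (only the values on edges are relevant). -/
structure SignedGraph (V : Type*) where
  G : SimpleGraph V
  sign : V → V → ℤˣ
  sign_symm : ∀ u v, sign u v = sign v u

namespace SignedGraph

variable {V W : Type*}

/-- The sign function, as a function on unordered pairs. -/
def esign (Γ : SignedGraph V) : Sym2 V → ℤˣ :=
  Sym2.lift ⟨Γ.sign, Γ.sign_symm⟩

/-- The sign of a walk: the product of the signs of its edges. -/
def walkSign (Γ : SignedGraph V) {u v : V} (p : Γ.G.Walk u v) : ℤˣ :=
  (p.edges.map Γ.esign).prod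

/-- A signed graph is balanced if every cycle is positive. -/
def Balanced (Γ : SignedGraph V) : Prop :=
  ∀ ⦃u : V⦄ (p : Γ.G.Walk u u), p.IsCycle → Γ.walkSign p = 1

/-- Switching at a vertex subset `U`: reverse the sign of every edge with exactly one
endpoint in `U`. -/
noncomputable def switch (Γ : SignedGraph V) (U : Set V) : SignedGraph V where
  G := Γ.G
  sign u v := (if u ∈ U then (-1 : ℤˣ) else 1) * (if v ∈ U then (-1 : ℤˣ) else 1) * Γ.sign u v
  sign_symm u v := by
    try dsimp only
    rw [Γ.sign_symm u v, mul_comm (if u ∈ U then (-1 : ℤˣ) else 1) (if v ∈ U then (-1 : ℤˣ) else 1)]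

/-- Two signed graphs on the same vertex set are "the same signed graph" when they have the
same underlying graph and the same signature on every edge. -/
def SEq (Γ Γ' : SignedGraph V) : Prop :=
  Γ.G = Γ'.G ∧ ∀ u v, Γ.G.Adj u v → Γ.sign u v = Γ'.sign u v

/-- Switching equivalence of two signed graphs on the same vertex set. -/
def SwitchEquiv (Γ Γ' : SignedGraph V) : Prop :=
  ∃ U : Set V, (Γ.switch U).SEq Γ'

/-- A sign-preserving isomorphism of signed graphs. -/
structure Iso (Γ : SignedGraph V) (Γ' : SignedGraph W) where
  toEquiv : V ≃ W
  adj_iff : ∀ u v, Γ.G.Adj u v ↔ Γ'.G.Adj (toEquiv u) (toEquiv v)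
  sign_eq : ∀ u v, Γ.G.Adj u v → Γ.sign u v = Γ'.sign (toEquiv u) (toEquiv v)

/-- Switching isomorphism: `Γ'` is isomorphic to a switching of `Γ`. -/
def SwitchIso (Γ : SignedGraph V) (Γ' : SignedGraph W) : Prop :=
  ∃ U : Set V, Nonempty ((Γ.switch U).Iso Γ')

/-- The negation of a signed graph: all edge signs reversed. -/
def neg (Γ : SignedGraph V) : SignedGraph V where
  G := Γ.G
  sign u v := -Γ.sign u v
  sign_symm u v := by (try dsimp only); rw [Γ.sign_symm]

variable [DecidableEq V]

/-- The underlying graph of the `k`-token graph: vertices are the `k`-subsets of `V`,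
with `A ~ B` when `A Δ B = {a, b}`, `a ∈ A`, `b ∈ B` and `a ~ b` in `G`. -/
def tokenAdj (G : SimpleGraph V) (k : ℕ) : SimpleGraph {A : Finset V // A.card = k} where
  Adj A B := ∃ a b, a ∈ A.1 ∧ b ∈ B.1 ∧ G.Adj a b ∧ symmDiff A.1 B.1 = {a, b}
  symm := by
    refine ⟨?_⟩
    rintro A B ⟨a, b, ha, hb, hab, hs⟩
    exact ⟨b, a, hb, ha, hab.symm, by rw [symmDiff_comm, hs, Finset.pair_comm]⟩
  loopless := by
    refine ⟨?_⟩
    rintro A ⟨a, b, ha, hb, hab, hs⟩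
    rw [symmDiff_self] at hs
    have h : a ∈ ({a, b} : Finset V) := Finset.mem_insert_self a {b}
    rw [← hs] at h
    simp at h

/-- The `k`-token signed graph: the edge obtained by moving a token along `ab`
carries the sign of `ab`. -/
def token (Γ : SignedGraph V) (k : ℕ) : SignedGraph {A : Finset V // A.card = k} where
  G := tokenAdj Γ.G k
  sign A B := ∏ a ∈ A.1 \ B.1, ∏ b ∈ B.1 \ A.1, Γ.sign a b
  sign_symm A B := by
    try dsimp only
    rw [Finset.prod_comm]
    exact Finset.prod_congr rfl fun b _ => Finset.prod_congr rfl fun a _ => Γ.sign_symm a b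

/-- The signed adjacency matrix (over `ℝ`). -/
noncomputable def adjMatrix (Γ : SignedGraph V) [Fintype V] : Matrix V V ℝ :=
  Matrix.of fun u v => if Γ.G.Adj u v then ((Γ.sign u v : ℤ) : ℝ) else 0

/-- The signed Laplacian matrix `L = D - A` (over `ℝ`). -/
noncomputable def lapMatrix (Γ : SignedGraph V) [Fintype V] : Matrix V V ℝ :=
  Matrix.diagonal (fun v => (Γ.G.degree v : ℝ)) - Γ.adjMatrix

/-- The quantity `ℓ_m(Γ)`. -/
noncomputable def ellm (Γ : SignedGraph V) [Fintype V] (m : ℕ) : ℝ :=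
  (∑ r ∈ Finset.range (m + 1),
      ((Γ.G.adjMatrix ℝ ^ r).trace - (Γ.adjMatrix ^ r).trace)) /
  (∑ r ∈ Finset.range (m + 1),
      ((Γ.G.adjMatrix ℝ ^ r).trace + |(Γ.adjMatrix ^ r).trace|))

/-- The unbalance level `ℓ(Γ) = max {ℓ_{n-1}(Γ), ℓ_n(Γ)}`. -/
noncomputable def unbalanceLevel (Γ : SignedGraph V) [Fintype V] : ℝ :=
  max (Γ.ellm (Fintype.card V - 1)) (Γ.ellm (Fintype.card V))

/-- The frustration index: the minimum number of negative edges whose deletion yields a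
balanced signed graph. -/
noncomputable def frustrationIndex (Γ : SignedGraph V) : ℕ :=
  sInf {m : ℕ | ∃ F : Finset (Sym2 V), F.card = m ∧ ↑F ⊆ Γ.G.edgeSet ∧
    (∀ e ∈ F, Γ.esign e = -1) ∧
    Balanced ⟨Γ.G.deleteEdges ↑F, Γ.sign, Γ.sign_symm⟩}

/-- The signed complement of a balanced signed graph, with respect to a switching function
`s` witnessing balance (`A_σ = S A S`): the signed graph on the complement graph with
adjacency matrix `S Ā S`, i.e. with sign `s u * s v` on each complement edge. -/
def scompl (Γ : SignedGraph V) (s : V → ℤˣ) : SignedGraph V where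
  G := Γ.Gᶜ
  sign u v := s u * s v
  sign_symm u v := mul_comm _ _

/-- The real diagonal `±1` matrix associated with `s : V → ℤˣ`. -/
noncomputable def diagS [Fintype V] (s : V → ℤˣ) : Matrix V V ℝ :=
  Matrix.diagonal fun v => ((s v : ℤ) : ℝ)

end SignedGraph

/-- The all-positive signed complete graph on `V`. -/
def allPos (V : Type*) : SignedGraph V := ⟨⊤, fun _ _ => 1, fun _ _ => rfl⟩

/-- The `(n; 1, k)`-binomial matrix. -/
noncomputable def binomB (V : Type*) [Fintype V] [DecidableEq V] (k : ℕ) :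
    Matrix {A : Finset V // A.card = k} V ℝ :=
  Matrix.of fun A v => if v ∈ A.1 then 1 else 0

/-- The `(n; k₁, k₂)`-binomial matrix. -/
noncomputable def binomB2 (V : Type*) [Fintype V] [DecidableEq V] (k₁ k₂ : ℕ) :
    Matrix {A : Finset V // A.card = k₂} {A : Finset V // A.card = k₁} ℝ :=
  Matrix.of fun A X => if X.1 ⊆ A.1 then 1 else 0

section AuxWalk

open SimpleGraph

variable {V : Type*}

namespace SignedGraph

lemma walkSign_cons (Γ : SignedGraph V) {u v w : V} (h : Γ.G.Adj u v) (p : Γ.G.Walk v w) :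
    Γ.walkSign (SimpleGraph.Walk.cons h p) = Γ.sign u v * Γ.walkSign p := by
  simp [walkSign, SimpleGraph.Walk.edges_cons, esign]

lemma walkSign_append (Γ : SignedGraph V) {u v w : V} (p : Γ.G.Walk u v) (q : Γ.G.Walk v w) :
    Γ.walkSign (p.append q) = Γ.walkSign p * Γ.walkSign q := by
  simp [walkSign, SimpleGraph.Walk.edges_append]

lemma walkSign_reverse (Γ : SignedGraph V) {u v : V} (p : Γ.G.Walk u v) :
    Γ.walkSign p.reverse = Γ.walkSign p := by
  simp only [walkSign, SimpleGraph.Walk.edges_reverse, List.map_reverse, List.prod_reverse]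

end SignedGraph

end AuxWalk
section AuxBalance

open SimpleGraph

variable {V : Type*}

/-- a walk from `u` to `u` with no duplicate support is trivial -/
lemma closed_support_nodup_nil {G : SimpleGraph V} {u : V} (r : G.Walk u u)
    (h : r.support.Nodup) : r.length = 0 := by
  cases r with
  | nil => rfl
  | cons h' r' =>
    exfalso
    rw [SimpleGraph.Walk.support_cons, List.nodup_cons] at h
    exact h.1 r'.end_mem_support

/-- In a path from `v` to `u`, the edge `s(u,v)` can only be the last (and first) edge. -/
lemma path_mem_edge_end {G : SimpleGraph V} :
    ∀ {v u : V} (q : G.Walk v u), q.support.Nodup → u ≠ v → s(u, v) ∈ q.edges → q.length = 1 := by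
  intro v u q
  induction q with
  | nil => intro _ _ he; simp at he
  | @cons v y u h r ih =>
    intro hnd hne he
    rw [SimpleGraph.Walk.support_cons, List.nodup_cons] at hnd
    rw [SimpleGraph.Walk.edges_cons, List.mem_cons] at he
    rcases he with he | he
    · rw [Sym2.eq_iff] at he
      rcases he with ⟨rfl, rfl⟩ | ⟨rfl, -⟩
      · exact absurd rfl hne
      · rw [SimpleGraph.Walk.length_cons, closed_support_nodup_nil r hnd.2]
    · exact absurd (r.snd_mem_support_of_mem_edges he) hnd.1

lemma SignedGraph.walkSign_closed (Γ : SignedGraph V) (hbal : Γ.Balanced) :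
    ∀ (n : ℕ) {u : V} (p : Γ.G.Walk u u), p.length = n → Γ.walkSign p = 1 := by
  intro n
  induction n using Nat.strong_induction_on with
  | _ n ih =>
    intro u p hlen
    rcases Nat.eq_zero_or_pos n with rfl | hn
    · cases p with
      | nil => rfl
      | cons h r => simp at hlen
    by_cases hN : p.support.tail.Nodup
    · by_cases hE : p.edges.Nodup
      · -- it is a cycle
        refine hbal p ⟨⟨⟨hE⟩, ?_⟩, hN⟩
        intro hnil
        rw [hnil] at hlen
        simp at hlen
        omega
      · -- duplicate edge: backtracking, length 2
        cases p with
        | nil => simp at hlen; omega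
        | @cons u v _ h q =>
          have hq : q.support.Nodup := by
            rwa [SimpleGraph.Walk.support_cons, List.tail_cons] at hN
          have hqe : q.edges.Nodup := SimpleGraph.Walk.edges_nodup_of_support_nodup hq
          have hmem : s(u, v) ∈ q.edges := by
            rw [SimpleGraph.Walk.edges_cons, List.nodup_cons] at hE
            by_contra hx
            exact hE ⟨hx, hqe⟩
          have hq1 : q.length = 1 := path_mem_edge_end q hq h.ne hmem
          -- q is a single edge from v to u
          cases q with
          | nil => simp at hq1
          | @cons v w _ h2 q2 =>
            cases q2 with
            | nil =>
              rw [Γ.walkSign_cons, Γ.walkSign_cons]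
              have : Γ.walkSign (SimpleGraph.Walk.nil : Γ.G.Walk u u) = 1 := rfl
              rw [this, mul_one, Γ.sign_symm v u, Int.units_mul_self]
            | cons h3 q3 => simp [SimpleGraph.Walk.length_cons] at hq1
    · -- a vertex repeats in the tail: split the walk
      obtain ⟨w, hw2⟩ : ∃ w, 1 < p.support.tail.count w := by
        by_contra hx
        push_neg at hx
        exact hN (List.nodup_iff_count_le_one.mpr hx)
      have hwmem : w ∈ p.support := by
        rw [p.support_eq_cons]
        exact List.mem_cons_of_mem _ (List.count_pos_iff.mp (by omega))
      set q := p.rotate w hwmem with hqdef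
      have hsign : Γ.walkSign q = Γ.walkSign p := by
        unfold SignedGraph.walkSign
        exact List.Perm.prod_eq (List.Perm.map _ (p.rotate_edges w hwmem).perm)
      have hqlen : q.length = n := by
        have := (p.rotate_edges w hwmem).perm.length_eq
        rwa [SimpleGraph.Walk.length_edges, SimpleGraph.Walk.length_edges, hlen] at this
      have hqcount : 1 < q.support.tail.count w := by
        rwa [(SimpleGraph.Walk.support_rotate p w hwmem).perm.count_eq]
      rw [← hsign]
      cases hq : q with
      | nil => rw [hq] at hqlen; simp at hqlen; omega
      | @cons w x _ h r =>
        rw [hq, SimpleGraph.Walk.support_cons, List.tail_cons] at hqcount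
        have hwr : w ∈ r.support := List.count_pos_iff.mp (by omega)
        have hsplit := r.take_spec hwr
        have hcount1 : (r.takeUntil w hwr).support.count w = 1 :=
          r.count_support_takeUntil_eq_one hwr
        have hcount2 : 0 < (r.dropUntil w hwr).support.tail.count w := by
          have : r.support.count w =
              (r.takeUntil w hwr).support.count w
                + (r.dropUntil w hwr).support.tail.count w := by
            conv_lhs => rw [← hsplit]
            rw [SimpleGraph.Walk.support_append, List.count_append]
          omega
        have hlensum := congrArg SimpleGraph.Walk.length hsplit
        rw [SimpleGraph.Walk.length_append] at hlensum
        have hrlen : r.length + 1 = n := by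
          rw [hq] at hqlen; simpa using hqlen
        have hdroplen : 0 < (r.dropUntil w hwr).length := by
          have h2 := List.length_pos_of_mem (List.count_pos_iff.mp hcount2)
          have h3 : (r.dropUntil w hwr).support.length = (r.dropUntil w hwr).length + 1 :=
            SimpleGraph.Walk.length_support _
          rw [List.length_tail, h3] at h2
          omega
        have e1 : Γ.walkSign (SimpleGraph.Walk.cons h (r.takeUntil w hwr)) = 1 :=
          ih ((r.takeUntil w hwr).length + 1) (by omega) _ (by simp)
        have e2 : Γ.walkSign (r.dropUntil w hwr) = 1 :=
          ih ((r.dropUntil w hwr).length) (by omega) _ rfl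
        conv_lhs => rw [← hsplit]
        rw [Γ.walkSign_cons, Γ.walkSign_append, ← mul_assoc, ← Γ.walkSign_cons h, e1, e2, one_mul]

end AuxBalance
section AuxSwitch

open SimpleGraph

variable {V : Type*}

lemma SignedGraph.exists_switching (Γ : SignedGraph V) (hbal : Γ.Balanced) :
    ∃ s : V → ℤˣ, ∀ u v, Γ.G.Adj u v → Γ.sign u v = s u * s v := by
  have key : ∀ {u : V} (p : Γ.G.Walk u u), Γ.walkSign p = 1 :=
    fun p => Γ.walkSign_closed hbal p.length p rfl
  have hreach : ∀ v : V, Γ.G.Reachable (Γ.G.connectedComponentMk v).out v :=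
    fun v => SimpleGraph.ConnectedComponent.exact ((Γ.G.connectedComponentMk v).out_eq)
  refine ⟨fun v => Γ.walkSign (hreach v).some, ?_⟩
  intro u v h
  have hc : Γ.G.connectedComponentMk u = Γ.G.connectedComponentMk v :=
    SimpleGraph.ConnectedComponent.sound h.reachable
  have hout : (Γ.G.connectedComponentMk u).out = (Γ.G.connectedComponentMk v).out := by rw [hc]
  set pu := (hreach u).some with hpu
  set pv := (hreach v).some with hpv
  have hclosed : Γ.walkSign (pu.append ((SimpleGraph.Walk.cons h pv.reverse).copy rfl hout.symm)) = 1 :=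
    key _
  rw [Γ.walkSign_append] at hclosed
  have hcopy : Γ.walkSign ((SimpleGraph.Walk.cons h pv.reverse).copy rfl hout.symm)
      = Γ.sign u v * Γ.walkSign pv := by
    have h2 : Γ.walkSign ((SimpleGraph.Walk.cons h pv.reverse).copy rfl hout.symm)
        = Γ.walkSign (SimpleGraph.Walk.cons h pv.reverse) := by
      unfold SignedGraph.walkSign
      rw [SimpleGraph.Walk.edges_copy]
    rw [h2, Γ.walkSign_cons, Γ.walkSign_reverse]
  rw [hcopy] at hclosed
  show Γ.sign u v = Γ.walkSign pu * Γ.walkSign pv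
  rcases Int.units_eq_one_or (Γ.walkSign pu) with h1 | h1 <;>
    rcases Int.units_eq_one_or (Γ.walkSign pv) with h2 | h2 <;>
      rcases Int.units_eq_one_or (Γ.sign u v) with h3 | h3 <;>
        rw [h1, h2, h3] at hclosed ⊢ <;> simp_all

end AuxSwitch
section AuxToken

open SimpleGraph Finset

variable {V : Type*} [Fintype V] [DecidableEq V]

/-- Move a token from `a` to `b` in the `k`-subset `A` (junk value if the result
does not have `k` elements). -/
noncomputable def mvtx (k : ℕ) (A : {A : Finset V // A.card = k}) (a b : V) :
    {B : Finset V // B.card = k} :=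
  if h : (insert b (A.1.erase a)).card = k then ⟨_, h⟩ else A

lemma mvtx_spec (k : ℕ) (A : {A : Finset V // A.card = k}) {a b : V}
    (ha : a ∈ A.1) (hb : b ∉ A.1) : (mvtx k A a b).1 = insert b (A.1.erase a) := by
  have hpos : 0 < k := A.2 ▸ Finset.card_pos.mpr ⟨a, ha⟩
  have hcard : (insert b (A.1.erase a)).card = k := by
    rw [Finset.card_insert_of_notMem (fun hb' => hb (Finset.mem_of_mem_erase hb')),
      Finset.card_erase_of_mem ha, A.2]
    omega
  rw [mvtx, dif_pos hcard]

lemma sdiff_mv_left (A : Finset V) {a b : V} (ha : a ∈ A) (hb : b ∉ A) :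
    A \ insert b (A.erase a) = {a} := by
  ext x
  simp only [Finset.mem_sdiff, Finset.mem_insert, Finset.mem_erase, Finset.mem_singleton]
  constructor
  · rintro ⟨hxA, hx⟩
    push_neg at hx
    by_contra hxa
    exact (hx.2 hxa) hxA
  · rintro rfl
    push_neg
    exact ⟨ha, fun hxb => absurd ha (hxb ▸ hb), fun hc => absurd rfl hc⟩

lemma sdiff_mv_right (A : Finset V) {a b : V} (ha : a ∈ A) (hb : b ∉ A) :
    insert b (A.erase a) \ A = {b} := by
  ext x
  simp only [Finset.mem_sdiff, Finset.mem_insert, Finset.mem_erase, Finset.mem_singleton]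
  constructor
  · rintro ⟨hx, hxA⟩
    rcases hx with rfl | ⟨-, hxA'⟩
    · rfl
    · exact absurd hxA' hxA
  · rintro rfl
    exact ⟨Or.inl rfl, hb⟩

lemma tokenAdj_mvtx (G : SimpleGraph V) (k : ℕ) (A : {A : Finset V // A.card = k}) {a b : V}
    (ha : a ∈ A.1) (hb : b ∉ A.1) (hab : G.Adj a b) :
    (SignedGraph.tokenAdj G k).Adj A (mvtx k A a b) := by
  refine ⟨a, b, ha, ?_, hab, ?_⟩
  · rw [mvtx_spec k A ha hb]; exact Finset.mem_insert_self b _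
  · rw [mvtx_spec k A ha hb, symmDiff_def, sup_eq_union, sdiff_mv_left A.1 ha hb,
      sdiff_mv_right A.1 ha hb]
    ext x
    simp

lemma token_sum (G : SimpleGraph V) (k : ℕ) (A : {A : Finset V // A.card = k})
    (f : {B : Finset V // B.card = k} → ℝ) :
    ∑ B : {B : Finset V // B.card = k}, (if (SignedGraph.tokenAdj G k).Adj A B then f B else 0)
      = ∑ a ∈ A.1, ∑ b ∈ A.1ᶜ, (if G.Adj a b then f (mvtx k A a b) else 0) := by
  rw [← Finset.sum_product']
  rw [← Finset.sum_filter, ← Finset.sum_filter]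
  refine (Finset.sum_bij (fun (p : V × V) (_ : p ∈ (A.1 ×ˢ A.1ᶜ).filter fun p => G.Adj p.1 p.2) =>
    mvtx k A p.1 p.2) ?_ ?_ ?_ ?_).symm
  · rintro ⟨a, b⟩ hp
    rw [Finset.mem_filter, Finset.mem_product, Finset.mem_compl] at hp
    rw [Finset.mem_filter]
    exact ⟨Finset.mem_univ _, tokenAdj_mvtx G k A hp.1.1 hp.1.2 hp.2⟩
  · rintro ⟨a, b⟩ hp ⟨a', b'⟩ hp' heq
    rw [Finset.mem_filter, Finset.mem_product, Finset.mem_compl] at hp hp'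
    obtain ⟨⟨ha, hb⟩, -⟩ := hp
    obtain ⟨⟨ha', hb'⟩, -⟩ := hp'
    have hset : insert b (A.1.erase a) = insert b' (A.1.erase a') := by
      have := congrArg Subtype.val heq
      rwa [mvtx_spec k A ha hb, mvtx_spec k A ha' hb'] at this
    have hbb : b = b' := by
      have : b ∈ insert b' (A.1.erase a') := hset ▸ Finset.mem_insert_self b _
      rcases Finset.mem_insert.mp this with h | h
      · exact h
      · exact absurd (Finset.mem_of_mem_erase h) hb
    have haa : a = a' := by
      by_contra hne
      have h1 : a' ∈ insert b (A.1.erase a) := by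
        refine Finset.mem_insert.mpr (Or.inr (Finset.mem_erase.mpr ⟨fun hc => hne hc.symm, ha'⟩))
      rw [hset] at h1
      rcases Finset.mem_insert.mp h1 with h | h
      · exact hb' (h ▸ ha')
      · exact (Finset.mem_erase.mp h).1 rfl
    exact Prod.ext haa hbb
  · intro B hB
    rw [Finset.mem_filter] at hB
    obtain ⟨-, a, b, ha, hbB, hab, hsd⟩ := hB
    have haB : a ∉ B.1 := by
      intro haB
      have : a ∉ symmDiff A.1 B.1 := by
        rw [Finset.mem_symmDiff]; push_neg; exact ⟨fun _ => haB, fun _ => ha⟩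
      rw [hsd] at this
      exact this (Finset.mem_insert_self a _)
    have hbA : b ∉ A.1 := by
      intro hbA
      have : b ∉ symmDiff A.1 B.1 := by
        rw [Finset.mem_symmDiff]; push_neg; exact ⟨fun _ => hbB, fun _ => hbA⟩
      rw [hsd] at this
      exact this (Finset.mem_insert.mpr (Or.inr (Finset.mem_singleton_self b)))
    have hE : ∀ x, (x ∈ A.1 ∧ x ∉ B.1 ∨ x ∈ B.1 ∧ x ∉ A.1) ↔ (x = a ∨ x = b) := by
      intro x
      rw [← Finset.mem_symmDiff, hsd]
      simp
    have hBeq : B.1 = insert b (A.1.erase a) := by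
      ext x
      rw [Finset.mem_insert, Finset.mem_erase]
      constructor
      · intro hxB
        by_cases hxA : x ∈ A.1
        · refine Or.inr ⟨fun hc => haB (hc ▸ hxB), hxA⟩
        · rcases (hE x).mp (Or.inr ⟨hxB, hxA⟩) with rfl | rfl
          · exact absurd ha hxA
          · exact Or.inl rfl
      · rintro (rfl | ⟨hxa, hxA⟩)
        · exact hbB
        · by_contra hxB
          rcases (hE x).mp (Or.inl ⟨hxA, hxB⟩) with rfl | rfl
          · exact hxa rfl
          · exact hbA hxA
    refine ⟨⟨a, b⟩, ?_, ?_⟩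
    · rw [Finset.mem_filter, Finset.mem_product, Finset.mem_compl]
      exact ⟨⟨ha, hbA⟩, hab⟩
    · apply Subtype.ext
      rw [mvtx_spec k A ha hbA, hBeq]
  · intro p hp
    rfl

lemma degree_sum_real (G : SimpleGraph V) (u : V) :
    (G.degree u : ℝ) = ∑ b : V, if G.Adj u b then (1 : ℝ) else 0 := by
  rw [SimpleGraph.degree, SimpleGraph.neighborFinset_eq_filter, Finset.card_filter]
  push_cast
  rfl

lemma token_degree (G : SimpleGraph V) (k : ℕ) (A : {A : Finset V // A.card = k}) :
    ((SignedGraph.tokenAdj G k).degree A : ℝ)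
      = ∑ a ∈ A.1, ∑ b ∈ A.1ᶜ, (if G.Adj a b then (1 : ℝ) else 0) := by
  rw [← token_sum G k A (fun _ => (1 : ℝ))]
  rw [SimpleGraph.degree, SimpleGraph.neighborFinset_eq_filter, Finset.card_filter]
  push_cast
  rfl

end AuxToken
section AuxCount

open SimpleGraph Finset

variable {V : Type*} [Fintype V] [DecidableEq V]

lemma count_identity (G : SimpleGraph V) (k : ℕ) (A : {A : Finset V // A.card = k}) (u : V) :
    (if u ∈ A.1 then (G.degree u : ℝ) else 0) - ∑ v ∈ A.1, (if G.Adj v u then (1:ℝ) else 0)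
      = (if u ∈ A.1 then (((SignedGraph.tokenAdj G k).degree A : ℕ) : ℝ) else 0)
        - ∑ a ∈ A.1, ∑ b ∈ A.1ᶜ,
            (if G.Adj a b then (if u ∈ insert b (A.1.erase a) then (1:ℝ) else 0) else 0) := by
  have hsymm : ∑ v ∈ A.1, (if G.Adj v u then (1:ℝ) else 0)
      = ∑ v ∈ A.1, (if G.Adj u v then (1:ℝ) else 0) :=
    Finset.sum_congr rfl fun v _ => by rw [G.adj_comm]
  by_cases hu : u ∈ A.1
  · rw [if_pos hu, if_pos hu, token_degree, degree_sum_real, hsymm]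
    have hM : ∀ a ∈ A.1, ∀ b ∈ A.1ᶜ,
        (if G.Adj a b then (if u ∈ insert b (A.1.erase a) then (1:ℝ) else 0) else 0)
          = (if G.Adj a b then (1:ℝ) else 0)
            - (if a = u then (if G.Adj a b then (1:ℝ) else 0) else 0) := by
      intro a _ b hb
      rw [Finset.mem_compl] at hb
      have hub : u ≠ b := fun hc => hb (hc ▸ hu)
      have hiff : (u ∈ insert b (A.1.erase a)) ↔ ¬ (a = u) := by
        rw [Finset.mem_insert, Finset.mem_erase]
        constructor
        · rintro (rfl | ⟨hne, -⟩)
          · exact absurd rfl hub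
          · exact fun hc => hne hc.symm
        · intro hne
          exact Or.inr ⟨fun hc => hne hc.symm, hu⟩
      by_cases hadj : G.Adj a b <;> by_cases hau : a = u <;> simp [hiff, hadj, hau, hub]
    rw [Finset.sum_congr rfl fun a ha => Finset.sum_congr rfl fun b hb => hM a ha b hb]
    have hsplit : ∑ a ∈ A.1, ∑ b ∈ A.1ᶜ,
        ((if G.Adj a b then (1:ℝ) else 0)
          - (if a = u then (if G.Adj a b then (1:ℝ) else 0) else 0))
        = (∑ a ∈ A.1, ∑ b ∈ A.1ᶜ, (if G.Adj a b then (1:ℝ) else 0))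
          - ∑ a ∈ A.1, ∑ b ∈ A.1ᶜ, (if a = u then (if G.Adj a b then (1:ℝ) else 0) else 0) := by
      rw [← Finset.sum_sub_distrib]
      exact Finset.sum_congr rfl fun a _ => by rw [← Finset.sum_sub_distrib]
    rw [hsplit]
    have hinner : ∑ a ∈ A.1, ∑ b ∈ A.1ᶜ, (if a = u then (if G.Adj a b then (1:ℝ) else 0) else 0)
        = ∑ b ∈ A.1ᶜ, (if G.Adj u b then (1:ℝ) else 0) := by
      have h1 : ∀ a ∈ A.1, ∑ b ∈ A.1ᶜ, (if a = u then (if G.Adj a b then (1:ℝ) else 0) else 0)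
          = if a = u then (∑ b ∈ A.1ᶜ, if G.Adj a b then (1:ℝ) else 0) else 0 := by
        intro a _
        split <;> simp
      rw [Finset.sum_congr rfl h1, Finset.sum_ite_eq' A.1 u, if_pos hu]
    rw [hinner]
    have htotal := Finset.sum_add_sum_compl A.1 (fun b => if G.Adj u b then (1:ℝ) else 0)
    linarith
  · rw [if_neg hu, if_neg hu]
    have hM : ∀ a ∈ A.1, ∑ b ∈ A.1ᶜ,
        (if G.Adj a b then (if u ∈ insert b (A.1.erase a) then (1:ℝ) else 0) else 0)
          = (if G.Adj a u then (1:ℝ) else 0) := by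
      intro a _
      have h1 : ∀ b ∈ A.1ᶜ, (if G.Adj a b then (if u ∈ insert b (A.1.erase a) then (1:ℝ) else 0) else 0)
          = if b = u then (if G.Adj a b then (1:ℝ) else 0) else 0 := by
        intro b _
        have hiff : (u ∈ insert b (A.1.erase a)) ↔ b = u := by
          rw [Finset.mem_insert, Finset.mem_erase]
          constructor
          · rintro (rfl | ⟨-, hin⟩)
            · rfl
            · exact absurd hin hu
          · rintro rfl
            exact Or.inl rfl
        simp only [hiff]
        by_cases hadj : G.Adj a b <;> by_cases hbu : b = u <;> simp [hadj, hbu]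
      rw [Finset.sum_congr rfl h1, Finset.sum_ite_eq' A.1ᶜ u, if_pos (Finset.mem_compl.mpr hu)]
    rw [Finset.sum_congr rfl hM]

end AuxCount

/-- for a balanced signed graph there is a signed binomial matrix
`B = S_k B⁺ S_1` with `B L_1 = L_k B`. -/
theorem signed_binomial_commutes {V : Type*} [Fintype V] [DecidableEq V] (n k : ℕ)
    (hn : Fintype.card V = n) (hk1 : 1 ≤ k) (hk2 : k ≤ n - 1)
    (Γ : SignedGraph V) (hbal : Γ.Balanced) :
    ∃ (s1 : V → ℝ) (sk : {A : Finset V // A.card = k} → ℝ),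
      (∀ v, s1 v = 1 ∨ s1 v = -1) ∧ (∀ A, sk A = 1 ∨ sk A = -1) ∧
      Matrix.diagonal sk * binomB V k * Matrix.diagonal s1 * Γ.lapMatrix
        = (Γ.token k).lapMatrix * (Matrix.diagonal sk * binomB V k * Matrix.diagonal s1) := by
  obtain ⟨s, hs⟩ := Γ.exists_switching hbal
  have hs1sq : ∀ v : V, ((s v : ℤ) : ℝ) * ((s v : ℤ) : ℝ) = 1 := by
    intro v; rcases Int.units_eq_one_or (s v) with h | h <;> rw [h] <;> norm_num
  have hsR : ∀ u v : V, Γ.G.Adj u v →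
      ((Γ.sign u v : ℤ) : ℝ) = ((s u : ℤ) : ℝ) * ((s v : ℤ) : ℝ) := by
    intro u v h; rw [hs u v h]; push_cast; ring
  refine ⟨fun v => ((s v : ℤ) : ℝ), fun A => ∏ w ∈ A.1, ((s w : ℤ) : ℝ), ?_, ?_, ?_⟩
  · intro v; rcases Int.units_eq_one_or (s v) with h | h <;> simp [h]
  · intro A
    show (∏ w ∈ A.1, ((s w : ℤ) : ℝ)) = 1 ∨ (∏ w ∈ A.1, ((s w : ℤ) : ℝ)) = -1
    have hcast : ∏ w ∈ A.1, ((s w : ℤ) : ℝ) = (((∏ w ∈ A.1, s w : ℤˣ) : ℤ) : ℝ) := by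
      push_cast; rfl
    rw [hcast]
    rcases Int.units_eq_one_or (∏ w ∈ A.1, s w) with h | h <;> rw [h] <;> norm_num
  · ext A u
    have hentry : ∀ (C : {A : Finset V // A.card = k}) (v : V),
        (Matrix.diagonal (fun A : {A : Finset V // A.card = k} => ∏ w ∈ A.1, ((s w : ℤ) : ℝ))
          * binomB V k * Matrix.diagonal (fun v : V => ((s v : ℤ) : ℝ))) C v
          = (∏ w ∈ C.1, ((s w : ℤ) : ℝ)) * ((if v ∈ C.1 then (1:ℝ) else 0) * ((s v : ℤ) : ℝ)) := by
      intro C v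
      rw [Matrix.mul_diagonal, Matrix.diagonal_mul, mul_assoc]
      rfl
    rw [Matrix.mul_apply, Matrix.mul_apply]
    simp only [hentry, SignedGraph.lapMatrix, Matrix.sub_apply, Matrix.diagonal_apply,
      SignedGraph.adjMatrix, Matrix.of_apply, SignedGraph.token]
    -- LHS transformation
    have hL : ∀ v : V,
        (∏ w ∈ A.1, ((s w : ℤ) : ℝ)) * ((if v ∈ A.1 then (1:ℝ) else 0) * ((s v : ℤ) : ℝ))
            * ((if v = u then ((Γ.G.degree v : ℕ) : ℝ) else 0)
              - (if Γ.G.Adj v u then ((Γ.sign v u : ℤ) : ℝ) else 0))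
          = (if v = u then (∏ w ∈ A.1, ((s w : ℤ) : ℝ)) * ((s u : ℤ) : ℝ)
                * (if u ∈ A.1 then ((Γ.G.degree u : ℕ) : ℝ) else 0) else 0)
            - (if v ∈ A.1 then (if Γ.G.Adj v u then
                (∏ w ∈ A.1, ((s w : ℤ) : ℝ)) * ((s u : ℤ) : ℝ) else 0) else 0) := by
      intro v
      by_cases hv : v = u
      · subst hv
        have hnadj : ¬ Γ.G.Adj v v := Γ.G.loopless.irrefl v
        by_cases hvA : v ∈ A.1 <;> simp [hvA, hnadj] <;> ring
      · by_cases hvA : v ∈ A.1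
        · by_cases hadj : Γ.G.Adj v u
          · simp only [if_neg hv, if_pos hvA, if_pos hadj, hsR v u hadj]
            linear_combination (-(∏ w ∈ A.1, ((s w : ℤ) : ℝ)) * ((s u : ℤ) : ℝ)) * hs1sq v
          · simp [hv, hvA, hadj]
        · simp [hv, hvA]
    rw [Finset.sum_congr rfl (fun v _ => hL v), Finset.sum_sub_distrib,
      Finset.sum_ite_eq' Finset.univ u, if_pos (Finset.mem_univ u)]
    have hLsum : ∑ v : V, (if v ∈ A.1 then (if Γ.G.Adj v u then
          (∏ w ∈ A.1, ((s w : ℤ) : ℝ)) * ((s u : ℤ) : ℝ) else 0) else 0)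
        = (∏ w ∈ A.1, ((s w : ℤ) : ℝ)) * ((s u : ℤ) : ℝ)
            * ∑ v ∈ A.1, (if Γ.G.Adj v u then (1:ℝ) else 0) := by
      rw [Finset.sum_ite_mem, Finset.univ_inter, Finset.mul_sum]
      exact Finset.sum_congr rfl fun v _ => by split <;> simp
    rw [hLsum]
    -- RHS transformation
    have hR : ∀ B : {A : Finset V // A.card = k},
        ((if A = B then (((SignedGraph.tokenAdj Γ.G k).degree A : ℕ) : ℝ) else 0)
            - (if (SignedGraph.tokenAdj Γ.G k).Adj A B then
                ((((∏ x ∈ A.1 \ B.1, ∏ y ∈ B.1 \ A.1, Γ.sign x y : ℤˣ)) : ℤ) : ℝ) else 0))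
          * ((∏ w ∈ B.1, ((s w : ℤ) : ℝ)) * ((if u ∈ B.1 then (1:ℝ) else 0) * ((s u : ℤ) : ℝ)))
          = (if A = B then (∏ w ∈ A.1, ((s w : ℤ) : ℝ)) * ((s u : ℤ) : ℝ)
                * (if u ∈ A.1 then (((SignedGraph.tokenAdj Γ.G k).degree A : ℕ) : ℝ) else 0) else 0)
            - (if (SignedGraph.tokenAdj Γ.G k).Adj A B then
                ((((∏ x ∈ A.1 \ B.1, ∏ y ∈ B.1 \ A.1, Γ.sign x y : ℤˣ)) : ℤ) : ℝ)
                  * ((∏ w ∈ B.1, ((s w : ℤ) : ℝ))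
                    * ((if u ∈ B.1 then (1:ℝ) else 0) * ((s u : ℤ) : ℝ))) else 0) := by
      intro B
      rw [sub_mul]
      congr 1
      · by_cases hAB : A = B
        · subst hAB
          by_cases huA : u ∈ A.1 <;> simp [huA] <;> ring
        · simp [hAB]
      · split <;> simp
    erw [Finset.sum_congr rfl (fun B _ => hR B)]
    rw [Finset.sum_sub_distrib,
      Finset.sum_ite_eq Finset.univ A, if_pos (Finset.mem_univ A)]
    rw [token_sum Γ.G k A (fun B => ((((∏ x ∈ A.1 \ B.1, ∏ y ∈ B.1 \ A.1, Γ.sign x y : ℤˣ)) : ℤ) : ℝ)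
        * ((∏ w ∈ B.1, ((s w : ℤ) : ℝ)) * ((if u ∈ B.1 then (1:ℝ) else 0) * ((s u : ℤ) : ℝ))))]
    have hf : ∀ a ∈ A.1, ∀ b ∈ A.1ᶜ,
        (if Γ.G.Adj a b then
            ((((∏ x ∈ A.1 \ (mvtx k A a b).1, ∏ y ∈ (mvtx k A a b).1 \ A.1, Γ.sign x y : ℤˣ)) : ℤ) : ℝ)
              * ((∏ w ∈ (mvtx k A a b).1, ((s w : ℤ) : ℝ))
                * ((if u ∈ (mvtx k A a b).1 then (1:ℝ) else 0) * ((s u : ℤ) : ℝ)))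
          else 0)
          = (∏ w ∈ A.1, ((s w : ℤ) : ℝ)) * ((s u : ℤ) : ℝ)
              * (if Γ.G.Adj a b then (if u ∈ insert b (A.1.erase a) then (1:ℝ) else 0) else 0) := by
      intro a ha b hb
      have hb' : b ∉ A.1 := Finset.mem_compl.mp hb
      by_cases hadj : Γ.G.Adj a b
      · rw [if_pos hadj, if_pos hadj, mvtx_spec k A ha hb',
          sdiff_mv_left A.1 ha hb', sdiff_mv_right A.1 ha hb',
          Finset.prod_singleton, Finset.prod_singleton,
          Finset.prod_insert (fun hc => hb' (Finset.mem_of_mem_erase hc)), hsR a b hadj]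
        have h2 := Finset.mul_prod_erase A.1 (fun w => ((s w : ℤ) : ℝ)) ha
        have h3 : ∏ x ∈ A.1.erase a, ((s x : ℤ) : ℝ)
            = ((s a : ℤ) : ℝ) * ∏ w ∈ A.1, ((s w : ℤ) : ℝ) := by
          linear_combination ((s a : ℤ) : ℝ) * h2
            - (∏ x ∈ A.1.erase a, ((s x : ℤ) : ℝ)) * hs1sq a
        rw [h3]
        linear_combination
          (((s b : ℤ) : ℝ) * ((s b : ℤ) : ℝ) * (∏ w ∈ A.1, ((s w : ℤ) : ℝ))
            * (if u ∈ insert b (A.1.erase a) then (1:ℝ) else 0) * ((s u : ℤ) : ℝ)) * hs1sq a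
          + ((∏ w ∈ A.1, ((s w : ℤ) : ℝ))
            * (if u ∈ insert b (A.1.erase a) then (1:ℝ) else 0) * ((s u : ℤ) : ℝ)) * hs1sq b
      · simp [hadj]
    rw [Finset.sum_congr rfl (fun a ha => Finset.sum_congr rfl (fun b hb => hf a ha b hb))]
    have hpull : ∑ a ∈ A.1, ∑ b ∈ A.1ᶜ, ((∏ w ∈ A.1, ((s w : ℤ) : ℝ)) * ((s u : ℤ) : ℝ)
          * (if Γ.G.Adj a b then (if u ∈ insert b (A.1.erase a) then (1:ℝ) else 0) else 0))
        = (∏ w ∈ A.1, ((s w : ℤ) : ℝ)) * ((s u : ℤ) : ℝ)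
          * ∑ a ∈ A.1, ∑ b ∈ A.1ᶜ,
              (if Γ.G.Adj a b then (if u ∈ insert b (A.1.erase a) then (1:ℝ) else 0) else 0) := by
      rw [Finset.mul_sum]
      exact Finset.sum_congr rfl fun a _ => by rw [Finset.mul_sum]
    rw [hpull]
    linear_combination ((∏ w ∈ A.1, ((s w : ℤ) : ℝ)) * ((s u : ℤ) : ℝ))
      * count_identity Γ.G k A u
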